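/- Let p be a prime, r ≥ 1, and let X, Y, S, U, V be random variables on a finite probability space, with X, Y, S taking values in finite sets and U, V taking values in Z_{p^r}; let Z = U + V with addition in Z_{p^r}. Suppose the joint distribution factors as P(x,y,u,v) = P_{XY}(x,y)·P_{U|X}(u|x)·P_{V|Y}(v|y) (i.e., U−X−Y−V is a Markov chain), and suppose S is conditionally independent of (U,V) given (X,Y). Then H(U|X) ≤ H(Z|S) and H(V|Y) ≤ H(Z|S). -/

import Mathlib

open scoped Classical

noncomputable section

/-- Base-2 Shannon entropy of a probability mass function on a finite type
(with the convention `0 · log 0 = 0`, automatic since `Real.logb 2 0 = 0`). -/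
def ent {A : Type*} [Fintype A] (P : A → ℝ) : ℝ :=
  -∑ a, P a * Real.logb 2 (P a)

/-- Distribution (pushforward pmf) of a random variable `X` on a finite
probability space with weights `μ`. -/
def distOf {Ω A : Type*} [Fintype Ω] (μ : Ω → ℝ) (X : Ω → A) : A → ℝ :=
  fun a => ∑ ω, if X ω = a then μ ω else 0

/-- Entropy `H(X)` of a random variable `X` on a finite probability space. -/
def Hent {Ω A : Type*} [Fintype Ω] [Fintype A] (μ : Ω → ℝ) (X : Ω → A) : ℝ :=
  ent (distOf μ X)

/-- Conditional entropy `H(X | Y) = H(X,Y) − H(Y)`. -/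
def condEnt {Ω A B : Type*} [Fintype Ω] [Fintype A] [Fintype B]
    (μ : Ω → ℝ) (X : Ω → A) (Y : Ω → B) : ℝ :=
  Hent μ (fun ω => (X ω, Y ω)) - Hent μ Y

/-- The additive subgroup `p^i · Z_{p^r} = {p^i * x : x ∈ Z_{p^r}}` of `Z_{p^r}`. -/
def pZ (p r i : ℕ) : AddSubgroup (ZMod (p ^ r)) where
  carrier := Set.range (fun x : ZMod (p ^ r) => (p : ZMod (p ^ r)) ^ i * x)
  add_mem' := by rintro a b ⟨x, rfl⟩ ⟨y, rfl⟩; exact ⟨x + y, by ring⟩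
  zero_mem' := ⟨0, by ring⟩
  neg_mem' := by rintro a ⟨x, rfl⟩; exact ⟨-x, by ring⟩

instance {G : Type*} [AddGroup G] [Finite G] (H : AddSubgroup G) : Fintype (G ⧸ H) :=
  Fintype.ofFinite _

instance {G : Type*} [AddGroup G] [Finite G] (H : AddSubgroup G) : Fintype H :=
  Fintype.ofFinite _

/-- A sequence `x ∈ A^n` is strongly `ε`-typical for the pmf `Q` if each empirical
frequency is within `ε` of `Q a`, and symbols of zero probability never occur. -/
def StronglyTypical {A : Type*} [Fintype A] {n : ℕ} (Q : A → ℝ)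
    (x : Fin n → A) (ε : ℝ) : Prop :=
  ∀ a : A,
    |((Finset.univ.filter (fun j => x j = a)).card : ℝ) / n - Q a| ≤ ε ∧
    (Q a = 0 → (Finset.univ.filter (fun j => x j = a)).card = 0)

section aux
variable {Ω : Type*} [Fintype Ω] (μ : Ω → ℝ)

lemma distOf_nonneg (hμ0 : ∀ ω, 0 ≤ μ ω) {A : Type*} (W : Ω → A) (a : A) :
    0 ≤ distOf μ W a :=
  Finset.sum_nonneg fun ω _ => by split <;> simp [hμ0 ω]

lemma le_distOf (hμ0 : ∀ ω, 0 ≤ μ ω) {A : Type*} (W : Ω → A) (ω : Ω) :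
    μ ω ≤ distOf μ W (W ω) := by
  classical
  calc μ ω = if W ω = W ω then μ ω else 0 := by simp
  _ ≤ _ := Finset.single_le_sum (f := fun ω' => if W ω' = W ω then μ ω' else 0)
      (fun i _ => by split <;> simp [hμ0 i]) (Finset.mem_univ ω)

lemma distOf_mono (hμ0 : ∀ ω, 0 ≤ μ ω) {A B : Type*} (W1 : Ω → A) (W2 : Ω → B)
    {a : A} {b : B} (h : ∀ ω, W1 ω = a → W2 ω = b) :
    distOf μ W1 a ≤ distOf μ W2 b := by
  refine Finset.sum_le_sum fun ω _ => ?_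
  by_cases h' : W1 ω = a
  · simp [h', h ω h']
  · simp only [h', if_false]; split <;> simp [hμ0 ω]

lemma transfer {A : Type*} [Fintype A] (W : Ω → A) (g : A → ℝ) :
    ∑ ω, μ ω * g (W ω) = ∑ a, distOf μ W a * g a := by
  simp_rw [distOf, Finset.sum_mul]
  rw [Finset.sum_comm]
  refine Finset.sum_congr rfl fun ω _ => ?_
  simp [ite_mul]

lemma sum_distOf_eq_one (hμ1 : ∑ ω, μ ω = 1) {A : Type*} [Fintype A] (W : Ω → A) :
    ∑ a, distOf μ W a = 1 := by
  have := transfer μ W (fun _ => 1)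
  simpa [hμ1] using this.symm

lemma Hent_eq {A : Type*} [Fintype A] (W : Ω → A) :
    Hent μ W = -∑ ω, μ ω * Real.logb 2 (distOf μ W (W ω)) := by
  rw [Hent, ent, ← transfer]

end aux

lemma helper {Ω 𝒳 𝒯 G : Type*} [Fintype Ω] [Fintype 𝒳] [Fintype 𝒯] [Fintype G]
    [AddGroup G]
    (μ : Ω → ℝ) (hμ0 : ∀ ω, 0 ≤ μ ω) (hμ1 : ∑ ω, μ ω = 1)
    (X : Ω → 𝒳) (S : Ω → 𝒯) (U W : Ω → G) (Q : 𝒳 → G → ℝ)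
    (h1 : ∀ u x, distOf μ (fun ω => (U ω, X ω)) (u, x) = distOf μ X x * Q x u)
    (h2 : ∀ s x u w, distOf μ (fun ω => (S ω, X ω, U ω, W ω)) (s, x, u, w)
        = distOf μ (fun ω => (S ω, X ω, W ω)) (s, x, w) * Q x u) :
    condEnt μ U X ≤ condEnt μ (fun ω => U ω + W ω) S := by
  have hL2 : (0:ℝ) < Real.log 2 := Real.log_pos one_lt_two
  -- marginal of S from (Z, S)
  have hSm : ∀ s, distOf μ S s = ∑ z, distOf μ (fun ω => (U ω + W ω, S ω)) (z, s) := by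
    intro s
    simp only [distOf]
    rw [Finset.sum_comm]
    refine Finset.sum_congr rfl fun ω _ => ?_
    simp [Prod.mk.injEq, ite_and, Finset.sum_ite_eq, Finset.sum_ite_eq']
  have hZS_le : ∀ z s, distOf μ (fun ω => (U ω + W ω, S ω)) (z, s) ≤ distOf μ S s := by
    intro z s
    exact distOf_mono μ hμ0 _ _ (fun ω h => by simpa using congrArg Prod.snd h)
  have hsum_u : ∀ w s, ∑ u, distOf μ (fun ω => (U ω + W ω, S ω)) (u + w, s)
      = distOf μ S s := by
    intro w s
    rw [hSm]
    exact Fintype.sum_bijective (· + w) (Equiv.addRight w).bijective _ _ (fun u => rfl)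
  -- positivity of Q on support
  have hQpos : ∀ ω, 0 < μ ω → 0 < Q (X ω) (U ω) := by
    intro ω h0
    have hpUX : 0 < distOf μ (fun ω' => (U ω', X ω')) (U ω, X ω) :=
      lt_of_lt_of_le h0 (le_distOf μ hμ0 _ ω)
    have hpX : 0 < distOf μ X (X ω) := lt_of_lt_of_le h0 (le_distOf μ hμ0 X ω)
    have hm : 0 < distOf μ X (X ω) * Q (X ω) (U ω) := (h1 (U ω) (X ω)) ▸ hpUX
    by_contra h
    push_neg at h
    nlinarith
  -- Step A : closed form for condEnt μ U X
  have eA : condEnt μ U X = -∑ ω, μ ω * Real.logb 2 (Q (X ω) (U ω)) := by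
    rw [condEnt, Hent_eq, Hent_eq]
    have : ∑ ω, μ ω * Real.logb 2 (Q (X ω) (U ω))
        = ∑ ω, (μ ω * Real.logb 2 (distOf μ (fun ω' => (U ω', X ω')) (U ω, X ω))
            - μ ω * Real.logb 2 (distOf μ X (X ω))) := by
      refine Finset.sum_congr rfl fun ω _ => ?_
      rcases eq_or_lt_of_le (hμ0 ω) with h0 | h0
      · simp [← h0]
      · have hpX : 0 < distOf μ X (X ω) := lt_of_lt_of_le h0 (le_distOf μ hμ0 X ω)
        have hQ : 0 < Q (X ω) (U ω) := hQpos ω h0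
        rw [h1, Real.logb_mul (ne_of_gt hpX) (ne_of_gt hQ)]
        ring
    rw [this, Finset.sum_sub_distrib]
    ring
  -- abbreviation for f
  set pZS : G × 𝒯 → ℝ := distOf μ (fun ω => (U ω + W ω, S ω)) with hpZS
  set pS : 𝒯 → ℝ := distOf μ S with hpS
  -- main inequality
  have main : ∑ ω, μ ω * (Real.logb 2 (pZS (U ω + W ω, S ω)) - Real.logb 2 (pS (S ω))
      - Real.logb 2 (Q (X ω) (U ω))) ≤ 0 := by
    set F : 𝒯 × 𝒳 × G × G → ℝ :=
      fun t => pZS (t.2.2.1 + t.2.2.2, t.1) / (pS t.1 * Q t.2.1 t.2.2.1) with hF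
    have stepC : ∑ ω, μ ω * F (S ω, X ω, U ω, W ω) ≤ 1 := by
      rw [transfer μ (fun ω => (S ω, X ω, U ω, W ω)) F]
      have bound1 : ∀ t : 𝒯 × 𝒳 × G × G,
          distOf μ (fun ω => (S ω, X ω, U ω, W ω)) t * F t
            ≤ distOf μ (fun ω => (S ω, X ω, W ω)) (t.1, t.2.1, t.2.2.2)
              * (pZS (t.2.2.1 + t.2.2.2, t.1) / pS t.1) := by
        rintro ⟨s, x, u, w⟩
        have hW3 : 0 ≤ distOf μ (fun ω => (S ω, X ω, W ω)) (s, x, w) :=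
          distOf_nonneg μ hμ0 _ _
        rw [h2]
        rcases eq_or_ne (Q x u) 0 with hQ | hQ
        · simp only [hQ, mul_zero, zero_mul]
          exact mul_nonneg hW3 (div_nonneg (distOf_nonneg μ hμ0 _ _) (distOf_nonneg μ hμ0 _ _))
        · rcases eq_or_ne (pS s) 0 with hS | hS
          · have hz : pZS (u + w, s) = 0 :=
              le_antisymm (hS ▸ hZS_le (u + w) s) (distOf_nonneg μ hμ0 _ _)
            simp [hz, hS, hF]
          · apply le_of_eq
            simp only [hF]
            field_simp
        -- end bound1
      calc ∑ t, distOf μ (fun ω => (S ω, X ω, U ω, W ω)) t * F t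
          ≤ ∑ t : 𝒯 × 𝒳 × G × G, distOf μ (fun ω => (S ω, X ω, W ω)) (t.1, t.2.1, t.2.2.2)
              * (pZS (t.2.2.1 + t.2.2.2, t.1) / pS t.1) :=
            Finset.sum_le_sum fun t _ => bound1 t
        _ = ∑ s, ∑ x, ∑ w, distOf μ (fun ω => (S ω, X ω, W ω)) (s, x, w)
              * ((∑ u, pZS (u + w, s)) / pS s) := by
            rw [Fintype.sum_prod_type]
            refine Finset.sum_congr rfl fun s _ => ?_
            rw [Fintype.sum_prod_type]
            refine Finset.sum_congr rfl fun x _ => ?_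
            rw [Fintype.sum_prod_type, Finset.sum_comm]
            refine Finset.sum_congr rfl fun w _ => ?_
            rw [Finset.sum_div, Finset.mul_sum]
        _ ≤ ∑ s, ∑ x, ∑ w, distOf μ (fun ω => (S ω, X ω, W ω)) (s, x, w) := by
            refine Finset.sum_le_sum fun s _ => Finset.sum_le_sum fun x _ =>
              Finset.sum_le_sum fun w _ => ?_
            rw [hsum_u]
            rcases eq_or_ne (pS s) 0 with hS | hS
            · simp [hS]
              exact distOf_nonneg μ hμ0 _ _
            · rw [div_self hS, mul_one]
        _ = 1 := by
            rw [← sum_distOf_eq_one μ hμ1 (fun ω => (S ω, X ω, W ω)),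
              Fintype.sum_prod_type]
            refine Finset.sum_congr rfl fun s _ => ?_
            rw [Fintype.sum_prod_type]
    -- pointwise log bound
    have step_ω : ∀ ω, μ ω * (Real.logb 2 (pZS (U ω + W ω, S ω)) - Real.logb 2 (pS (S ω))
        - Real.logb 2 (Q (X ω) (U ω))) ≤ μ ω * ((F (S ω, X ω, U ω, W ω) - 1) / Real.log 2) := by
      intro ω
      rcases eq_or_lt_of_le (hμ0 ω) with h0 | h0
      · simp [← h0]
      · have hpZS : 0 < pZS (U ω + W ω, S ω) := lt_of_lt_of_le h0 (le_distOf μ hμ0 _ ω)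
        have hpSpos : 0 < pS (S ω) := lt_of_lt_of_le h0 (le_distOf μ hμ0 S ω)
        have hQ : 0 < Q (X ω) (U ω) := hQpos ω h0
        have hfpos : 0 < F (S ω, X ω, U ω, W ω) := by
          simp only [hF]
          exact div_pos hpZS (mul_pos hpSpos hQ)
        have hlog : Real.logb 2 (pZS (U ω + W ω, S ω)) - Real.logb 2 (pS (S ω))
            - Real.logb 2 (Q (X ω) (U ω)) = Real.logb 2 (F (S ω, X ω, U ω, W ω)) := by
          simp only [hF]
          rw [Real.logb_div (ne_of_gt hpZS) (ne_of_gt (mul_pos hpSpos hQ)),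
            Real.logb_mul (ne_of_gt hpSpos) (ne_of_gt hQ)]
          ring
        rw [hlog]
        refine mul_le_mul_of_nonneg_left ?_ (le_of_lt h0)
        rw [Real.logb]
        exact (div_le_div_iff_of_pos_right hL2).mpr (Real.log_le_sub_one_of_pos hfpos)
    calc ∑ ω, μ ω * (Real.logb 2 (pZS (U ω + W ω, S ω)) - Real.logb 2 (pS (S ω))
        - Real.logb 2 (Q (X ω) (U ω)))
        ≤ ∑ ω, μ ω * ((F (S ω, X ω, U ω, W ω) - 1) / Real.log 2) :=
          Finset.sum_le_sum fun ω _ => step_ω ω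
      _ = (∑ ω, μ ω * F (S ω, X ω, U ω, W ω) - 1) / Real.log 2 := by
          rw [eq_div_iff (ne_of_gt hL2), Finset.sum_mul]
          rw [Finset.sum_congr rfl (fun ω _ => show μ ω * ((F (S ω, X ω, U ω, W ω) - 1) / Real.log 2) * Real.log 2
              = μ ω * F (S ω, X ω, U ω, W ω) - μ ω by field_simp)]
          rw [Finset.sum_sub_distrib, hμ1]
      _ ≤ 0 := div_nonpos_of_nonpos_of_nonneg (by linarith [stepC]) hL2.le
  -- conclude
  rw [eA, condEnt, Hent_eq, Hent_eq]
  simp_rw [mul_sub] at main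
  rw [Finset.sum_sub_distrib, Finset.sum_sub_distrib] at main
  have h1' : ∑ ω, μ ω * Real.logb 2 (distOf μ (fun ω' => (U ω' + W ω', S ω')) (U ω + W ω, S ω))
      = ∑ ω, μ ω * Real.logb 2 (pZS (U ω + W ω, S ω)) := rfl
  linarith [main]

theorem stmt12 (p r : ℕ) (hp : p.Prime) (hr : 1 ≤ r) [NeZero (p ^ r)]
    {Ω 𝒳 𝒴 𝒯 : Type*} [Fintype Ω] [Fintype 𝒳] [Fintype 𝒴] [Fintype 𝒯]
    (μ : Ω → ℝ) (hμ0 : ∀ ω, 0 ≤ μ ω) (hμ1 : ∑ ω, μ ω = 1)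
    (X : Ω → 𝒳) (Y : Ω → 𝒴) (S : Ω → 𝒯) (U V : Ω → ZMod (p ^ r))
    -- Markov chain U − X − Y − V : the joint law factors as P_{XY}·P_{U|X}·P_{V|Y}
    (hMarkov : ∃ (Q1 : 𝒳 → ZMod (p ^ r) → ℝ) (Q2 : 𝒴 → ZMod (p ^ r) → ℝ),
      (∀ x u, 0 ≤ Q1 x u) ∧ (∀ x, ∑ u, Q1 x u = 1) ∧
      (∀ y v, 0 ≤ Q2 y v) ∧ (∀ y, ∑ v, Q2 y v = 1) ∧
      ∀ x y u v,
        distOf μ (fun ω => (X ω, Y ω, U ω, V ω)) (x, y, u, v)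
          = distOf μ (fun ω => (X ω, Y ω)) (x, y) * Q1 x u * Q2 y v)
    -- S is conditionally independent of (U,V) given (X,Y)
    (hCI : ∀ s x y u v,
      distOf μ (fun ω => (S ω, X ω, Y ω, U ω, V ω)) (s, x, y, u, v)
          * distOf μ (fun ω => (X ω, Y ω)) (x, y)
        = distOf μ (fun ω => (S ω, X ω, Y ω)) (s, x, y)
          * distOf μ (fun ω => (X ω, Y ω, U ω, V ω)) (x, y, u, v)) :
    condEnt μ U X ≤ condEnt μ (fun ω => U ω + V ω) S ∧
    condEnt μ V Y ≤ condEnt μ (fun ω => U ω + V ω) S := by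
  obtain ⟨Q1, Q2, hQ1nn, hQ1s, hQ2nn, hQ2s, hM⟩ := hMarkov
  -- marginals
  have mUX : ∀ u x, distOf μ (fun ω => (U ω, X ω)) (u, x)
      = ∑ y, ∑ v, distOf μ (fun ω => (X ω, Y ω, U ω, V ω)) (x, y, u, v) := by
    intro u x
    simp only [distOf]
    conv_rhs => enter [2, y]; rw [Finset.sum_comm]
    rw [Finset.sum_comm]
    refine Finset.sum_congr rfl fun ω _ => ?_
    simp [Prod.mk.injEq, ite_and, Finset.sum_ite_eq, Finset.sum_ite_eq', and_comm]
  have mX : ∀ x, distOf μ X x = ∑ y, distOf μ (fun ω => (X ω, Y ω)) (x, y) := by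
    intro x
    simp only [distOf]
    rw [Finset.sum_comm]
    refine Finset.sum_congr rfl fun ω _ => ?_
    simp [Prod.mk.injEq, ite_and, Finset.sum_ite_eq, Finset.sum_ite_eq']
  have mSXUV : ∀ s x u v, distOf μ (fun ω => (S ω, X ω, U ω, V ω)) (s, x, u, v)
      = ∑ y, distOf μ (fun ω => (S ω, X ω, Y ω, U ω, V ω)) (s, x, y, u, v) := by
    intro s x u v
    simp only [distOf]
    rw [Finset.sum_comm]
    refine Finset.sum_congr rfl fun ω _ => ?_
    simp [Prod.mk.injEq, ite_and, Finset.sum_ite_eq, Finset.sum_ite_eq']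
  have mSXV : ∀ s x v, distOf μ (fun ω => (S ω, X ω, V ω)) (s, x, v)
      = ∑ y, ∑ u, distOf μ (fun ω => (S ω, X ω, Y ω, U ω, V ω)) (s, x, y, u, v) := by
    intro s x v
    simp only [distOf]
    conv_rhs => enter [2, y]; rw [Finset.sum_comm]
    rw [Finset.sum_comm]
    refine Finset.sum_congr rfl fun ω _ => ?_
    simp [Prod.mk.injEq, ite_and, Finset.sum_ite_eq, Finset.sum_ite_eq', and_comm]
  have mVY : ∀ v y, distOf μ (fun ω => (V ω, Y ω)) (v, y)
      = ∑ x, ∑ u, distOf μ (fun ω => (X ω, Y ω, U ω, V ω)) (x, y, u, v) := by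
    intro v y
    simp only [distOf]
    conv_rhs => enter [2, x]; rw [Finset.sum_comm]
    rw [Finset.sum_comm]
    refine Finset.sum_congr rfl fun ω _ => ?_
    simp [Prod.mk.injEq, ite_and, Finset.sum_ite_eq, Finset.sum_ite_eq', and_comm]
  have mY : ∀ y, distOf μ Y y = ∑ x, distOf μ (fun ω => (X ω, Y ω)) (x, y) := by
    intro y
    simp only [distOf]
    rw [Finset.sum_comm]
    refine Finset.sum_congr rfl fun ω _ => ?_
    simp [Prod.mk.injEq, ite_and, Finset.sum_ite_eq, Finset.sum_ite_eq', and_comm]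
  have mSYVU : ∀ s y v u, distOf μ (fun ω => (S ω, Y ω, V ω, U ω)) (s, y, v, u)
      = ∑ x, distOf μ (fun ω => (S ω, X ω, Y ω, U ω, V ω)) (s, x, y, u, v) := by
    intro s y v u
    simp only [distOf]
    rw [Finset.sum_comm]
    refine Finset.sum_congr rfl fun ω _ => ?_
    simp [Prod.mk.injEq, ite_and, Finset.sum_ite_eq, Finset.sum_ite_eq', and_comm]
  have mSYU : ∀ s y u, distOf μ (fun ω => (S ω, Y ω, U ω)) (s, y, u)
      = ∑ x, ∑ v, distOf μ (fun ω => (S ω, X ω, Y ω, U ω, V ω)) (s, x, y, u, v) := by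
    intro s y u
    simp only [distOf]
    conv_rhs => enter [2, x]; rw [Finset.sum_comm]
    rw [Finset.sum_comm]
    refine Finset.sum_congr rfl fun ω _ => ?_
    simp [Prod.mk.injEq, ite_and, Finset.sum_ite_eq, Finset.sum_ite_eq', and_comm]
  -- pointwise factorization of the full joint
  have F5 : ∀ s x y u v, distOf μ (fun ω => (S ω, X ω, Y ω, U ω, V ω)) (s, x, y, u, v)
      = distOf μ (fun ω => (S ω, X ω, Y ω)) (s, x, y) * Q1 x u * Q2 y v := by
    intro s x y u v
    rcases eq_or_ne (distOf μ (fun ω => (X ω, Y ω)) (x, y)) 0 with hxy | hxy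
    · have dom5 : distOf μ (fun ω => (S ω, X ω, Y ω, U ω, V ω)) (s, x, y, u, v)
          ≤ distOf μ (fun ω => (X ω, Y ω)) (x, y) :=
        distOf_mono μ hμ0 _ _ (fun ω h => by
          simp only [Prod.mk.injEq] at h ⊢; exact ⟨h.2.1, h.2.2.1⟩)
      have dom3 : distOf μ (fun ω => (S ω, X ω, Y ω)) (s, x, y)
          ≤ distOf μ (fun ω => (X ω, Y ω)) (x, y) :=
        distOf_mono μ hμ0 _ _ (fun ω h => by
          simp only [Prod.mk.injEq] at h ⊢; exact ⟨h.2.1, h.2.2⟩)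
      have h5 : distOf μ (fun ω => (S ω, X ω, Y ω, U ω, V ω)) (s, x, y, u, v) = 0 :=
        le_antisymm (hxy ▸ dom5) (distOf_nonneg μ hμ0 _ _)
      have h3 : distOf μ (fun ω => (S ω, X ω, Y ω)) (s, x, y) = 0 :=
        le_antisymm (hxy ▸ dom3) (distOf_nonneg μ hμ0 _ _)
      rw [h5, h3]; ring
    · have h := hCI s x y u v
      rw [hM x y u v] at h
      exact mul_right_cancel₀ hxy (h.trans (by ring))
  -- hypotheses for the U-side application of `helper`
  have h1U : ∀ u x, distOf μ (fun ω => (U ω, X ω)) (u, x) = distOf μ X x * Q1 x u := by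
    intro u x
    rw [mUX]
    calc ∑ y, ∑ v, distOf μ (fun ω => (X ω, Y ω, U ω, V ω)) (x, y, u, v)
        = ∑ y, distOf μ (fun ω => (X ω, Y ω)) (x, y) * Q1 x u := by
          refine Finset.sum_congr rfl fun y _ => ?_
          simp_rw [hM]
          rw [← Finset.mul_sum, hQ2s y, mul_one]
      _ = distOf μ X x * Q1 x u := by rw [mX, Finset.sum_mul]
  have h2U : ∀ s x u v, distOf μ (fun ω => (S ω, X ω, U ω, V ω)) (s, x, u, v)
      = distOf μ (fun ω => (S ω, X ω, V ω)) (s, x, v) * Q1 x u := by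
    intro s x u v
    rw [mSXUV, mSXV]
    have e1 : ∀ y, ∑ u', distOf μ (fun ω => (S ω, X ω, Y ω, U ω, V ω)) (s, x, y, u', v)
        = distOf μ (fun ω => (S ω, X ω, Y ω)) (s, x, y) * Q2 y v := by
      intro y
      calc ∑ u', distOf μ (fun ω => (S ω, X ω, Y ω, U ω, V ω)) (s, x, y, u', v)
          = (distOf μ (fun ω => (S ω, X ω, Y ω)) (s, x, y) * Q2 y v) * ∑ u', Q1 x u' := by
            rw [Finset.mul_sum]
            exact Finset.sum_congr rfl fun u' _ => by rw [F5]; ring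
        _ = _ := by rw [hQ1s, mul_one]
    calc ∑ y, distOf μ (fun ω => (S ω, X ω, Y ω, U ω, V ω)) (s, x, y, u, v)
        = ∑ y, (distOf μ (fun ω => (S ω, X ω, Y ω)) (s, x, y) * Q2 y v) * Q1 x u := by
          refine Finset.sum_congr rfl fun y _ => ?_
          rw [F5]; ring
      _ = (∑ y, ∑ u', distOf μ (fun ω => (S ω, X ω, Y ω, U ω, V ω)) (s, x, y, u', v)) * Q1 x u := by
          rw [Finset.sum_mul]
          exact Finset.sum_congr rfl fun y _ => by rw [e1 y]
  -- hypotheses for the V-side application of `helper`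
  have h1V : ∀ v y, distOf μ (fun ω => (V ω, Y ω)) (v, y) = distOf μ Y y * Q2 y v := by
    intro v y
    rw [mVY]
    calc ∑ x, ∑ u, distOf μ (fun ω => (X ω, Y ω, U ω, V ω)) (x, y, u, v)
        = ∑ x, distOf μ (fun ω => (X ω, Y ω)) (x, y) * Q2 y v := by
          refine Finset.sum_congr rfl fun x _ => ?_
          calc ∑ u, distOf μ (fun ω => (X ω, Y ω, U ω, V ω)) (x, y, u, v)
              = (distOf μ (fun ω => (X ω, Y ω)) (x, y) * Q2 y v) * ∑ u, Q1 x u := by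
                rw [Finset.mul_sum]
                exact Finset.sum_congr rfl fun u _ => by rw [hM]; ring
            _ = _ := by rw [hQ1s, mul_one]
      _ = distOf μ Y y * Q2 y v := by rw [mY, Finset.sum_mul]
  have h2V : ∀ s y v u, distOf μ (fun ω => (S ω, Y ω, V ω, U ω)) (s, y, v, u)
      = distOf μ (fun ω => (S ω, Y ω, U ω)) (s, y, u) * Q2 y v := by
    intro s y v u
    rw [mSYVU, mSYU]
    have e1 : ∀ x, ∑ v', distOf μ (fun ω => (S ω, X ω, Y ω, U ω, V ω)) (s, x, y, u, v')
        = distOf μ (fun ω => (S ω, X ω, Y ω)) (s, x, y) * Q1 x u := by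
      intro x
      calc ∑ v', distOf μ (fun ω => (S ω, X ω, Y ω, U ω, V ω)) (s, x, y, u, v')
          = (distOf μ (fun ω => (S ω, X ω, Y ω)) (s, x, y) * Q1 x u) * ∑ v', Q2 y v' := by
            rw [Finset.mul_sum]
            exact Finset.sum_congr rfl fun v' _ => by rw [F5]
        _ = _ := by rw [hQ2s, mul_one]
    calc ∑ x, distOf μ (fun ω => (S ω, X ω, Y ω, U ω, V ω)) (s, x, y, u, v)
        = ∑ x, (distOf μ (fun ω => (S ω, X ω, Y ω)) (s, x, y) * Q1 x u) * Q2 y v := by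
          refine Finset.sum_congr rfl fun x _ => ?_
          rw [F5]
      _ = (∑ x, ∑ v', distOf μ (fun ω => (S ω, X ω, Y ω, U ω, V ω)) (s, x, y, u, v')) * Q2 y v := by
          rw [Finset.sum_mul]
          exact Finset.sum_congr rfl fun x _ => by rw [e1 x]
  constructor
  · exact helper μ hμ0 hμ1 X S U V Q1 h1U h2U
  · have h := helper μ hμ0 hμ1 Y S V U Q2 h1V h2V
    have hfun : (fun ω => V ω + U ω) = (fun ω => U ω + V ω) := funext fun ω => add_comm _ _
    rwa [hfun] at h


end
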